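/- Let V be a 4-dimensional ℂ-vector space and let f be an endomorphism of V whose matrix in some basis of V is the single Jordan block J(1,4). Then there is a basis of the 6-dimensional space ⋀²V in which the induced endomorphism ⋀²f has matrix diag(J(1,5), J(1,1)). -/

import Mathlib

/-- The `n × n` Jordan block with eigenvalue `lam`: every diagonal entry is `lam` and every
entry directly above the diagonal is `1`. -/
def jordanBlock (lam : ℂ) (n : ℕ) : Matrix (Fin n) (Fin n) ℂ :=
  Matrix.of fun i j : Fin n =>
    if (j : ℕ) = (i : ℕ) then lam else if (j : ℕ) = (i : ℕ) + 1 then 1 else 0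

/-- The wedge `v ∧ w` as an element of the second exterior power `⋀[ℂ]^2 V`. -/
def wedge {V : Type*} [AddCommGroup V] [Module ℂ V] (v w : V) : ⋀[ℂ]^2 V :=
  ⟨ExteriorAlgebra.ι ℂ v * ExteriorAlgebra.ι ℂ w, by
    show _ ∈ LinearMap.range (ExteriorAlgebra.ι ℂ (M := V)) ^ 2
    rw [pow_two]
    exact Submodule.mul_mem_mul (LinearMap.mem_range_self _ v) (LinearMap.mem_range_self _ w)⟩



namespace ExtSq

open ExteriorAlgebra

variable {V : Type*} [AddCommGroup V] [Module ℂ V]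

lemma wedge_coe (v w : V) : (wedge v w : ExteriorAlgebra ℂ V) = ι ℂ v * ι ℂ w := rfl

lemma wedge_add_left (v v' w : V) : wedge (v + v') w = wedge v w + wedge v' w := by
  apply Subtype.ext; simp [wedge, add_mul]

lemma wedge_add_right (v w w' : V) : wedge v (w + w') = wedge v w + wedge v w' := by
  apply Subtype.ext; simp [wedge, mul_add]

lemma wedge_smul_left (c : ℂ) (v w : V) : wedge (c • v) w = c • wedge v w := by
  apply Subtype.ext; simp [wedge, smul_mul_assoc]

lemma wedge_smul_right (c : ℂ) (v w : V) : wedge v (c • w) = c • wedge v w := by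
  apply Subtype.ext; simp [wedge, mul_smul_comm]

lemma wedge_self (v : V) : wedge v v = 0 := by
  apply Subtype.ext; simp [wedge, ι_sq_zero]

lemma wedge_anticomm (v w : V) : wedge w v = - wedge v w := by
  apply Subtype.ext
  simp only [wedge, Submodule.coe_neg]
  exact eq_neg_of_add_eq_zero_left (ExteriorAlgebra.ι_add_mul_swap (R := ℂ) w v)

/-- wedge as a bilinear map. -/
noncomputable def wedgeL : V →ₗ[ℂ] V →ₗ[ℂ] ⋀[ℂ]^2 V :=
  LinearMap.mk₂ ℂ wedge wedge_add_left wedge_smul_left wedge_add_right wedge_smul_right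

lemma wedge_expand (B : Module.Basis (Fin 4) ℂ V) (v w : V) :
    wedge v w = ∑ a : Fin 4, ∑ b : Fin 4,
      (B.repr v a * B.repr w b) • wedge (B a) (B b) := by
  have hW : ∀ v w : V, wedge v w = wedgeL v w := fun _ _ => rfl
  conv_lhs => rw [hW, ← B.sum_repr v, ← B.sum_repr w]
  rw [map_sum]
  simp only [map_sum, map_smul, LinearMap.smul_apply, LinearMap.sum_apply, Finset.smul_sum,
    smul_smul]
  rw [Finset.sum_comm]
  exact Finset.sum_congr rfl fun a _ => Finset.sum_congr rfl fun b _ => by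
    rw [mul_comm]; rfl

end ExtSq


namespace ExtSq2
open ExteriorAlgebra

variable {V : Type*} [AddCommGroup V] [Module ℂ V]

/-- auxiliary multilinear map -/
noncomputable def mu (B : Module.Basis (Fin 4) ℂ V) (i j : Fin 4) : MultilinearMap ℂ (fun _ : Fin 2 => V) ℂ :=
  (MultilinearMap.mkPiAlgebra ℂ (Fin 2) ℂ).compLinearMap ![B.coord i, B.coord j]

lemma mu_apply (B : Module.Basis (Fin 4) ℂ V) (i j : Fin 4) (v : Fin 2 → V) :
    mu B i j v = B.coord i (v 0) * B.coord j (v 1) := by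
  simp [mu, MultilinearMap.compLinearMap_apply, MultilinearMap.mkPiAlgebra_apply,
    Fin.prod_univ_two]

/-- the alternating map (v, w) ↦ vᵢ wⱼ - vⱼ wᵢ. -/
noncomputable def phi (B : Module.Basis (Fin 4) ℂ V) (i j : Fin 4) : V [⋀^Fin 2]→ₗ[ℂ] ℂ :=
  { mu B i j - mu B j i with
    map_eq_zero_of_eq' := by
      intro v k l h hne
      have h01 : v 0 = v 1 := by
        fin_cases k <;> fin_cases l <;> simp_all
      show (mu B i j - mu B j i) v = 0
      simp [MultilinearMap.sub_apply, mu_apply, h01, mul_comm] }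

lemma phi_apply (B : Module.Basis (Fin 4) ℂ V) (i j : Fin 4) (v w : V) :
    phi B i j ![v, w] = B.repr v i * B.repr w j - B.repr v j * B.repr w i := by
  show (mu B i j - mu B j i) ![v, w] = _
  simp [MultilinearMap.sub_apply, mu_apply, Module.Basis.coord_apply]

/-- the linear functional on ⋀²V extracting the (i,j) wedge coordinate. -/
noncomputable def lfun (B : Module.Basis (Fin 4) ℂ V) (i j : Fin 4) : (⋀[ℂ]^2 V) →ₗ[ℂ] ℂ :=
  (liftAlternating (fun n => match n with | 2 => phi B i j | _ => 0)) ∘ₗ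
    (Submodule.subtype _)

lemma lfun_wedge (B : Module.Basis (Fin 4) ℂ V) (i j : Fin 4) (v w : V) :
    lfun B i j (wedge v w) =
      B.repr v i * B.repr w j - B.repr v j * B.repr w i := by
  have h1 : ((wedge v w : ⋀[ℂ]^2 V) : ExteriorAlgebra ℂ V) = ιMulti ℂ 2 ![v, w] := by
    rw [ιMulti_apply]
    simp [wedge, List.ofFn_succ]
  rw [lfun, LinearMap.comp_apply, Submodule.coe_subtype, h1,
    liftAlternating_apply_ιMulti]
  exact phi_apply B i j v w

end ExtSq2

namespace ExtSq3
open ExteriorAlgebra ExtSq ExtSq2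

variable {V : Type*} [AddCommGroup V] [Module ℂ V]

/-- the ordered pairs indexing the wedge basis -/
def pr : Fin 6 → Fin 4 × Fin 4 := ![(0,1),(0,2),(0,3),(1,2),(1,3),(2,3)]

@[simp] lemma pr_0 : pr 0 = (0,1) := rfl
@[simp] lemma pr_1 : pr 1 = (0,2) := rfl
@[simp] lemma pr_2 : pr 2 = (0,3) := rfl
@[simp] lemma pr_3 : pr 3 = (1,2) := rfl
@[simp] lemma pr_4 : pr 4 = (1,3) := rfl
@[simp] lemma pr_5 : pr 5 = (2,3) := rfl

/-- the wedge family -/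
noncomputable def Wv (B : Module.Basis (Fin 4) ℂ V) : Fin 6 → ⋀[ℂ]^2 V :=
  fun k => wedge (B (pr k).1) (B (pr k).2)

/-- the coordinate functionals -/
noncomputable def L (B : Module.Basis (Fin 4) ℂ V) : Fin 6 → ((⋀[ℂ]^2 V) →ₗ[ℂ] ℂ) :=
  fun k => lfun B (pr k).1 (pr k).2

lemma L_wedge (B : Module.Basis (Fin 4) ℂ V) (k : Fin 6) (v w : V) :
    L B k (wedge v w) = B.repr v (pr k).1 * B.repr w (pr k).2
      - B.repr v (pr k).2 * B.repr w (pr k).1 :=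
  lfun_wedge B _ _ v w

lemma L_W (B : Module.Basis (Fin 4) ℂ V) (k m : Fin 6) :
    L B k (Wv B m) = if k = m then 1 else 0 := by
  fin_cases k <;> fin_cases m <;>
    simp [Wv, L_wedge, Module.Basis.repr_self, Finsupp.single_apply]

/-- the target basis vectors: a Jordan chain of length 5 and an extra eigenvector -/
noncomputable def u (B : Module.Basis (Fin 4) ℂ V) : Fin 6 → ⋀[ℂ]^2 V :=
  ![ (2:ℂ) • Wv B 0,
     (3:ℂ) • Wv B 0 + (2:ℂ) • Wv B 1,
     Wv B 0 + (2:ℂ) • Wv B 1 + Wv B 2 + Wv B 3,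
     Wv B 3 + Wv B 4,
     Wv B 5,
     -Wv B 1 - Wv B 2 + Wv B 3 ]

@[simp] lemma u_0 (B : Module.Basis (Fin 4) ℂ V) : u B 0 = (2:ℂ) • Wv B 0 := rfl
@[simp] lemma u_1 (B : Module.Basis (Fin 4) ℂ V) : u B 1 = (3:ℂ) • Wv B 0 + (2:ℂ) • Wv B 1 := rfl
@[simp] lemma u_2 (B : Module.Basis (Fin 4) ℂ V) :
    u B 2 = Wv B 0 + (2:ℂ) • Wv B 1 + Wv B 2 + Wv B 3 := rfl
@[simp] lemma u_3 (B : Module.Basis (Fin 4) ℂ V) : u B 3 = Wv B 3 + Wv B 4 := rfl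
@[simp] lemma u_4 (B : Module.Basis (Fin 4) ℂ V) : u B 4 = Wv B 5 := rfl
@[simp] lemma u_5 (B : Module.Basis (Fin 4) ℂ V) : u B 5 = -Wv B 1 - Wv B 2 + Wv B 3 := rfl

/-- the dual functionals of `u` -/
noncomputable def L' (B : Module.Basis (Fin 4) ℂ V) : Fin 6 → ((⋀[ℂ]^2 V) →ₗ[ℂ] ℂ) :=
  ![ (1/2:ℂ) • L B 0 - (3/4:ℂ) • L B 1 + (7/8:ℂ) • L B 2 + (1/8:ℂ) • L B 3 - (1/8:ℂ) • L B 4,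
     (1/2:ℂ) • L B 1 - (3/4:ℂ) • L B 2 - (1/4:ℂ) • L B 3 + (1/4:ℂ) • L B 4,
     (1/2:ℂ) • L B 2 + (1/2:ℂ) • L B 3 - (1/2:ℂ) • L B 4,
     L B 4,
     L B 5,
     -((1/2:ℂ) • L B 2) + (1/2:ℂ) • L B 3 - (1/2:ℂ) • L B 4 ]

lemma L'_0 (B : Module.Basis (Fin 4) ℂ V) : L' B 0 =
    (1/2:ℂ) • L B 0 - (3/4:ℂ) • L B 1 + (7/8:ℂ) • L B 2 + (1/8:ℂ) • L B 3 - (1/8:ℂ) • L B 4 :=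
  rfl
lemma L'_1 (B : Module.Basis (Fin 4) ℂ V) : L' B 1 =
    (1/2:ℂ) • L B 1 - (3/4:ℂ) • L B 2 - (1/4:ℂ) • L B 3 + (1/4:ℂ) • L B 4 := rfl
lemma L'_2 (B : Module.Basis (Fin 4) ℂ V) : L' B 2 =
    (1/2:ℂ) • L B 2 + (1/2:ℂ) • L B 3 - (1/2:ℂ) • L B 4 := rfl
lemma L'_3 (B : Module.Basis (Fin 4) ℂ V) : L' B 3 = L B 4 := rfl
lemma L'_4 (B : Module.Basis (Fin 4) ℂ V) : L' B 4 = L B 5 := rfl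
lemma L'_5 (B : Module.Basis (Fin 4) ℂ V) : L' B 5 =
    -((1/2:ℂ) • L B 2) + (1/2:ℂ) • L B 3 - (1/2:ℂ) • L B 4 := rfl

lemma L'_u (B : Module.Basis (Fin 4) ℂ V) (k j : Fin 6) :
    L' B k (u B j) = if k = j then 1 else 0 := by
  fin_cases k <;> fin_cases j <;>
    simp [L'_0, L'_1, L'_2, L'_3, L'_4, L'_5,
        map_add, map_smul, map_neg, map_sub, LinearMap.add_apply, LinearMap.sub_apply,
        LinearMap.smul_apply, LinearMap.neg_apply, L_W, smul_eq_mul] <;>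
    norm_num

/-- coordinates w.r.t. `u` -/
noncomputable def Phi (B : Module.Basis (Fin 4) ℂ V) : (⋀[ℂ]^2 V) →ₗ[ℂ] (Fin 6 → ℂ) :=
  LinearMap.pi (L' B)

/-- linear combination of the `u` -/
noncomputable def Psi (B : Module.Basis (Fin 4) ℂ V) : (Fin 6 → ℂ) →ₗ[ℂ] (⋀[ℂ]^2 V) :=
  ∑ k : Fin 6, (LinearMap.proj k).smulRight (u B k)

lemma Psi_apply (B : Module.Basis (Fin 4) ℂ V) (c : Fin 6 → ℂ) :
    Psi B c = ∑ k : Fin 6, c k • u B k := by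
  simp [Psi, LinearMap.sum_apply, LinearMap.smulRight_apply, LinearMap.proj_apply]

lemma Phi_Psi (B : Module.Basis (Fin 4) ℂ V) : (Phi B) ∘ₗ (Psi B) = LinearMap.id := by
  apply LinearMap.ext
  intro c
  funext k
  simp [Phi, Psi_apply, LinearMap.pi_apply, map_sum, map_smul, L'_u, smul_eq_mul,
    mul_ite, mul_one, mul_zero, Finset.sum_ite_eq]

/-- linear maps agreeing on all wedges agree on `⋀²V`. -/
lemma wedge_ext {Y : Type*} [AddCommGroup Y] [Module ℂ Y]
    (F G : (⋀[ℂ]^2 V) →ₗ[ℂ] Y)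
    (h : ∀ v w : V, F (wedge v w) = G (wedge v w)) : F = G := by
  refine LinearMap.ext fun x => ?_
  obtain ⟨x, hx⟩ := x
  have hx' : x ∈ Submodule.span ℂ (Set.range (ιMulti ℂ 2 (M := V))) := by
    rw [ιMulti_span_fixedDegree]; exact hx
  refine Submodule.span_induction
    (p := fun y _ => ∀ hy2 : y ∈ ⋀[ℂ]^2 V, F ⟨y, hy2⟩ = G ⟨y, hy2⟩) ?_ ?_ ?_ ?_ hx' hx
  · rintro y ⟨v, rfl⟩ hy2
    have he : (⟨ιMulti ℂ 2 v, hy2⟩ : ⋀[ℂ]^2 V) = wedge (v 0) (v 1) := by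
      apply Subtype.ext
      show ιMulti ℂ 2 v = ι ℂ (v 0) * ι ℂ (v 1)
      rw [ιMulti_apply]
      simp [List.ofFn_succ]
    rw [he]; exact h _ _
  · intro h0
    have : (⟨0, h0⟩ : ⋀[ℂ]^2 V) = 0 := rfl
    rw [this, map_zero, map_zero]
  · intro y z hy hz hy' hz' hyz
    have hy2 : y ∈ ⋀[ℂ]^2 V := by rw [← ιMulti_span_fixedDegree]; exact hy
    have hz2 : z ∈ ⋀[ℂ]^2 V := by rw [← ιMulti_span_fixedDegree]; exact hz
    have : (⟨y + z, hyz⟩ : ⋀[ℂ]^2 V) = ⟨y, hy2⟩ + ⟨z, hz2⟩ := rfl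
    rw [this, map_add, map_add, hy' hy2, hz' hz2]
  · intro c y hy hy' hcy
    have hy2 : y ∈ ⋀[ℂ]^2 V := by rw [← ιMulti_span_fixedDegree]; exact hy
    have : (⟨c • y, hcy⟩ : ⋀[ℂ]^2 V) = c • (⟨y, hy2⟩ : ⋀[ℂ]^2 V) := rfl
    rw [this, map_smul, map_smul, hy' hy2]

end ExtSq3

namespace ExtSq4
open ExteriorAlgebra ExtSq ExtSq2 ExtSq3

variable {V : Type*} [AddCommGroup V] [Module ℂ V]

lemma Psi_Phi (B : Module.Basis (Fin 4) ℂ V) : (Psi B) ∘ₗ (Phi B) = LinearMap.id := by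
  apply wedge_ext
  intro v w
  rw [LinearMap.comp_apply, LinearMap.id_apply, Psi_apply]
  simp only [Phi, LinearMap.pi_apply]
  rw [Fin.sum_univ_six]
  simp only [L'_0, L'_1, L'_2, L'_3, L'_4, L'_5, LinearMap.add_apply, LinearMap.sub_apply,
    LinearMap.smul_apply, LinearMap.neg_apply, L_wedge, pr_0, pr_1, pr_2, pr_3, pr_4, pr_5,
    u_0, u_1, u_2, u_3, u_4, u_5, Wv, smul_eq_mul]
  conv_rhs => rw [wedge_expand B v w]
  simp only [Fin.sum_univ_four, wedge_self, smul_zero, add_zero, zero_add,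
    pr_0, pr_1, pr_2, pr_3, pr_4, pr_5]
  rw [wedge_anticomm (B 0) (B 1), wedge_anticomm (B 0) (B 2), wedge_anticomm (B 0) (B 3),
    wedge_anticomm (B 1) (B 2), wedge_anticomm (B 1) (B 3), wedge_anticomm (B 2) (B 3)]
  module

noncomputable def equivE (B : Module.Basis (Fin 4) ℂ V) : (⋀[ℂ]^2 V) ≃ₗ[ℂ] (Fin 6 → ℂ) :=
  LinearEquiv.ofLinear (Phi B) (Psi B) (Phi_Psi B) (Psi_Phi B)

noncomputable def C6 (B : Module.Basis (Fin 4) ℂ V) : Module.Basis (Fin 6) ℂ (⋀[ℂ]^2 V) :=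
  Module.Basis.ofEquivFun (equivE B)

lemma C6_apply (B : Module.Basis (Fin 4) ℂ V) (k : Fin 6) : C6 B k = u B k := by
  have h := congrFun (Module.Basis.coe_ofEquivFun (equivE B)) k
  rw [C6, h]
  rw [LinearEquiv.symm_apply_eq]
  funext j
  have : equivE B (u B k) = Phi B (u B k) := rfl
  rw [this]
  simp [Phi, LinearMap.pi_apply, L'_u, Pi.single_apply]

end ExtSq4


open ExteriorAlgebra ExtSq ExtSq2 ExtSq3 ExtSq4 in
/-- If the matrix of the endomorphism `f` of the 4-dimensional ℂ-vector space `V` in some basis is the single Jordan block J(1,4), then in some basis of the 6-dimensional space ⋀²V the induced endomorphism ⋀²f (characterized by `v ∧ w ↦ f v ∧ f w`) has matrix diag(J(1,5), J(1,1)). -/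
theorem exterior_square_jordan_J4 (V : Type*) [AddCommGroup V] [Module ℂ V]
    (hdim : Module.finrank ℂ V = 4)
    (f : V →ₗ[ℂ] V)
    (B : Module.Basis (Fin 4) ℂ V)
    (hB : LinearMap.toMatrix B B f = jordanBlock 1 4)
    (g : (⋀[ℂ]^2 V) →ₗ[ℂ] (⋀[ℂ]^2 V))
    (hg : ∀ v w : V, g (wedge v w) = wedge (f v) (f w)) :
    ∃ C : Module.Basis (Fin 5 ⊕ Fin 1) ℂ (⋀[ℂ]^2 V),
      LinearMap.toMatrix C C g = Matrix.fromBlocks (jordanBlock 1 5) 0 0 (jordanBlock 1 1) := by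
  classical
  have hf : ∀ j : Fin 4, f (B j) = ∑ i : Fin 4, jordanBlock 1 4 i j • B i := by
    intro j
    have hf' : f = Matrix.toLin B B (jordanBlock 1 4) := by
      rw [← hB, Matrix.toLin_toMatrix]
    rw [hf', Matrix.toLin_self]
  have v40 : ((0:Fin 4):ℕ) = 0 := rfl
  have v41 : ((1:Fin 4):ℕ) = 1 := rfl
  have v42 : ((2:Fin 4):ℕ) = 2 := rfl
  have v43 : ((3:Fin 4):ℕ) = 3 := rfl
  have v50 : ((0:Fin 5):ℕ) = 0 := rfl
  have v51 : ((1:Fin 5):ℕ) = 1 := rfl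
  have v52 : ((2:Fin 5):ℕ) = 2 := rfl
  have v53 : ((3:Fin 5):ℕ) = 3 := rfl
  have v54 : ((4:Fin 5):ℕ) = 4 := rfl
  have v10 : ((0:Fin 1):ℕ) = 0 := rfl
  have hf0 : f (B 0) = B 0 := by rw [hf]; norm_num [jordanBlock, Fin.sum_univ_four, v40, v41, v42, v43]
  have hf1 : f (B 1) = B 0 + B 1 := by rw [hf]; norm_num [jordanBlock, Fin.sum_univ_four, v40, v41, v42, v43]; simp
  have hf2 : f (B 2) = B 1 + B 2 := by rw [hf]; norm_num [jordanBlock, Fin.sum_univ_four, v40, v41, v42, v43]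
  have hf3 : f (B 3) = B 2 + B 3 := by rw [hf]; norm_num [jordanBlock, Fin.sum_univ_four, v40, v41, v42, v43]
  have hgW0 : g (Wv B 0) = Wv B 0 := by
    simp only [Wv, pr_0]
    rw [hg, hf0, hf1]
    simp [wedge_add_left, wedge_add_right, wedge_self]
  have hgW1 : g (Wv B 1) = Wv B 0 + Wv B 1 := by
    simp only [Wv, pr_0, pr_1]
    rw [hg, hf0, hf2]
    simp [wedge_add_left, wedge_add_right, wedge_self]
  have hgW2 : g (Wv B 2) = Wv B 1 + Wv B 2 := by
    simp only [Wv, pr_1, pr_2]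
    rw [hg, hf0, hf3]
    simp [wedge_add_left, wedge_add_right, wedge_self]
  have hgW3 : g (Wv B 3) = Wv B 0 + Wv B 1 + Wv B 3 := by
    simp only [Wv, pr_0, pr_1, pr_3]
    rw [hg, hf1, hf2]
    simp [wedge_add_left, wedge_add_right, wedge_self]
    module
  have hgW4 : g (Wv B 4) = Wv B 1 + Wv B 2 + Wv B 3 + Wv B 4 := by
    simp only [Wv, pr_1, pr_2, pr_3, pr_4]
    rw [hg, hf1, hf3]
    simp [wedge_add_left, wedge_add_right, wedge_self]
    module
  have hgW5 : g (Wv B 5) = Wv B 3 + Wv B 4 + Wv B 5 := by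
    simp only [Wv, pr_3, pr_4, pr_5]
    rw [hg, hf2, hf3]
    simp [wedge_add_left, wedge_add_right, wedge_self]
    module
  set C : Module.Basis (Fin 5 ⊕ Fin 1) ℂ (⋀[ℂ]^2 V) := (C6 B).reindex (finSumFinEquiv : Fin 5 ⊕ Fin 1 ≃ Fin 6).symm with hCdef
  have hinl0 : finSumFinEquiv ((Sum.inl 0 : Fin 5 ⊕ Fin 1)) = (0 : Fin 6) := by decide
  have hinl1 : finSumFinEquiv ((Sum.inl 1 : Fin 5 ⊕ Fin 1)) = (1 : Fin 6) := by decide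
  have hinl2 : finSumFinEquiv ((Sum.inl 2 : Fin 5 ⊕ Fin 1)) = (2 : Fin 6) := by decide
  have hinl3 : finSumFinEquiv ((Sum.inl 3 : Fin 5 ⊕ Fin 1)) = (3 : Fin 6) := by decide
  have hinl4 : finSumFinEquiv ((Sum.inl 4 : Fin 5 ⊕ Fin 1)) = (4 : Fin 6) := by decide
  have hinr0 : finSumFinEquiv ((Sum.inr 0 : Fin 5 ⊕ Fin 1)) = (5 : Fin 6) := by decide
  have hca0 : Fin.castAdd 1 (0 : Fin 5) = (0 : Fin 6) := by decide
  have hca1 : Fin.castAdd 1 (1 : Fin 5) = (1 : Fin 6) := by decide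
  have hca2 : Fin.castAdd 1 (2 : Fin 5) = (2 : Fin 6) := by decide
  have hca3 : Fin.castAdd 1 (3 : Fin 5) = (3 : Fin 6) := by decide
  have hca4 : Fin.castAdd 1 (4 : Fin 5) = (4 : Fin 6) := by decide
  have hna0 : Fin.natAdd 5 (0 : Fin 1) = (5 : Fin 6) := by decide
  have m62 : (⟨2, by norm_num⟩ : Fin 6) = 2 := rfl
  have m63 : (⟨3, by norm_num⟩ : Fin 6) = 3 := rfl
  have m64 : (⟨4, by norm_num⟩ : Fin 6) = 4 := rfl
  have m65 : (⟨5, by norm_num⟩ : Fin 6) = 5 := rfl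
  have hC : ∀ i : Fin 5 ⊕ Fin 1, C i = u B (finSumFinEquiv i) := by
    intro i
    rw [hCdef, Module.Basis.reindex_apply, Equiv.symm_symm, C6_apply]
  refine ⟨C, ?_⟩
  have hgeq : g = Matrix.toLin C C
      (Matrix.fromBlocks (jordanBlock 1 5) 0 0 (jordanBlock 1 1)) := by
    apply Module.Basis.ext C
    intro j
    rw [Matrix.toLin_self]
    rw [Fintype.sum_sum_type]
    rcases j with j | j
    · fin_cases j <;>
      · simp only [Fin.sum_univ_five, Fin.sum_univ_one, Matrix.fromBlocks_apply₁₁,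
          Matrix.fromBlocks_apply₂₁, Matrix.zero_apply, hC, hinl0, hinl1, hinl2,
          hinl3, hinl4, hinr0]
        norm_num [jordanBlock, v50, v51, v52, v53, v54, v10, Fin.val_mk, hca0, hca1, hca2, hca3, hca4, hna0, m62, m63, m64, m65]
        try simp only [u_0, u_1, u_2, u_3, u_4, u_5, map_add, map_smul, map_neg, map_sub,
          hgW0, hgW1, hgW2, hgW3, hgW4, hgW5]
        try module
    · fin_cases j <;>
      · simp only [Fin.sum_univ_five, Fin.sum_univ_one, Matrix.fromBlocks_apply₁₂,
          Matrix.fromBlocks_apply₂₂, Matrix.zero_apply, hC, hinl0, hinl1, hinl2,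
          hinl3, hinl4, hinr0]
        norm_num [jordanBlock, v50, v51, v52, v53, v54, v10, Fin.val_mk, hca0, hca1, hca2, hca3, hca4, hna0, m62, m63, m64, m65]
        try simp only [u_0, u_1, u_2, u_3, u_4, u_5, map_add, map_smul, map_neg, map_sub,
          hgW0, hgW1, hgW2, hgW3, hgW4, hgW5]
        try module
  rw [hgeq, LinearMap.toMatrix_toLin]
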